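/- Suppose ϑ : ℝ → ℝ^{1×m} is twice continuously differentiable and satisfies q·ϑ''(x) = ϑ(x)·A_z for all x ∈ ℝ together with ϑ(0) = 0. Then ϑ(x) = [0, ϑ'(0)]·exp(F·x)·[I_m; 0] for all x ∈ ℝ. Moreover, if in addition ϑ(1) = −C_z and G is invertible, then ϑ'(0) = −C_z·G^{-1}. -/

import Mathlib

open scoped Matrix

/-- The block matrix `F = [[0, A_z/q],[I, 0]]`. -/
noncomputable def Fblock (m : ℕ) (q : ℝ) (Az : Matrix (Fin m) (Fin m) ℝ) :
    Matrix (Fin m ⊕ Fin m) (Fin m ⊕ Fin m) ℝ :=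
  Matrix.fromBlocks 0 (q⁻¹ • Az) 1 0

/-- `G = [0, I]·exp(F)·[I; 0]`, the lower-left `m×m` block of `exp F`. -/
noncomputable def Gblock (m : ℕ) (q : ℝ) (Az : Matrix (Fin m) (Fin m) ℝ) :
    Matrix (Fin m) (Fin m) ℝ :=
  (NormedSpace.exp (Fblock m q Az)).toBlocks₂₁

theorem hasDerivAt_vecMul' {n : Type*} [Fintype n] {w : ℝ → n → ℝ}
    {M : ℝ → Matrix n n ℝ} {w' : n → ℝ} {M' : Matrix n n ℝ} {x : ℝ}
    (hw : HasDerivAt w w' x) (hM : ∀ i j, HasDerivAt (fun t => M t i j) (M' i j) x) :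
    HasDerivAt (fun t => w t ᵥ* M t) (w' ᵥ* M x + w x ᵥ* M') x := by
  rw [hasDerivAt_pi]
  intro j
  simp only [Matrix.vecMul, dotProduct, Pi.add_apply]
  have h := HasDerivAt.fun_sum (u := Finset.univ)
    (fun i _ => ((hasDerivAt_pi.mp hw i).mul (hM i j)))
  simpa [Finset.sum_add_distrib] using h

theorem expEntryDeriv {n : Type*} [Fintype n] [DecidableEq n] (F : Matrix n n ℝ) (t : ℝ)
    (i j : n) :
    HasDerivAt (fun u : ℝ => NormedSpace.exp (u • F) i j)
      ((NormedSpace.exp (t • F) * F) i j) t := by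
  letI : NormedRing (Matrix n n ℝ) := Matrix.linftyOpNormedRing
  letI : NormedAlgebra ℝ (Matrix n n ℝ) := Matrix.linftyOpNormedAlgebra
  letI : CompleteSpace (Matrix n n ℝ) := FiniteDimensional.complete ℝ _
  have h := hasDerivAt_exp_smul_const (𝕂 := ℝ) F t
  let L : Matrix n n ℝ →ₗ[ℝ] ℝ :=
    { toFun := fun A => A i j, map_add' := fun _ _ => rfl, map_smul' := fun _ _ => rfl }
  exact (LinearMap.toContinuousLinearMap L).hasFDerivAt.comp_hasDerivAt t h

theorem ode_unique' {n : Type*} [Fintype n] [DecidableEq n] (F : Matrix n n ℝ)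
    (w : ℝ → n → ℝ) (hw : ∀ x, HasDerivAt w (w x ᵥ* F) x) (x : ℝ) :
    w x = w 0 ᵥ* NormedSpace.exp (x • F) := by
  letI : NormedRing (Matrix n n ℝ) := Matrix.linftyOpNormedRing
  letI : NormedAlgebra ℝ (Matrix n n ℝ) := Matrix.linftyOpNormedAlgebra
  letI : CompleteSpace (Matrix n n ℝ) := FiniteDimensional.complete ℝ _
  set E : ℝ → Matrix n n ℝ := fun t => NormedSpace.exp (t • F) with hE
  have hcomm : ∀ t : ℝ, F * E t = E t * F := fun t =>
    (((Commute.refl F).smul_right t).exp_right).eq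
  have hmul : ∀ s t : ℝ, E s * E t = E (s + t) := by
    intro s t
    simp only [hE]
    rw [add_smul, Matrix.exp_add_of_commute _ _ (((Commute.refl F).smul_right t).smul_left s)]
  have hE0 : E 0 = 1 := by simp [hE, NormedSpace.exp_zero]
  have hd : ∀ t : ℝ, HasDerivAt (fun u => w u ᵥ* E (-u)) 0 t := by
    intro t
    have hM : ∀ i j, HasDerivAt (fun u => E (-u) i j) ((-(E (-t) * F)) i j) t := by
      intro i j
      have h := (expEntryDeriv F (-t) i j).comp t (hasDerivAt_neg t)
      simpa [hE, Function.comp_def, neg_smul, mul_comm] using h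
    have h := hasDerivAt_vecMul' (hw t) hM
    convert h using 1
    rw [Matrix.vecMul_vecMul, hcomm (-t), Matrix.vecMul_neg]
    exact (add_neg_cancel _).symm
  have hconst : (fun u => w u ᵥ* E (-u)) x = (fun u => w u ᵥ* E (-u)) 0 :=
    is_const_of_deriv_eq_zero (fun t => (hd t).differentiableAt)
      (fun t => (hd t).deriv) x 0
  have h0 : w x ᵥ* E (-x) = w 0 := by
    simpa [hE0, Matrix.vecMul_one] using hconst
  calc w x = w x ᵥ* (E (-x) * E x) := by
        rw [hmul, neg_add_cancel, hE0, Matrix.vecMul_one]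
    _ = (w x ᵥ* E (-x)) ᵥ* E x := by rw [Matrix.vecMul_vecMul]
    _ = w 0 ᵥ* E x := by rw [h0]

/-- every C² solution of `q·ϑ'' = ϑ·A_z` with `ϑ(0) = 0` has the explicit
form `ϑ(x) = [0, ϑ'(0)]·exp(Fx)·[I; 0]`; if moreover `ϑ(1) = −C_z` and `G` is
invertible, then `ϑ'(0) = −C_z·G⁻¹`. -/
theorem stmt6
    (m : ℕ) (hm : 1 ≤ m)
    (Az : Matrix (Fin m) (Fin m) ℝ) (Cz : Fin m → ℝ)
    (q : ℝ) (hq : q ≠ 0)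
    (ϑ : ℝ → Fin m → ℝ) (hϑC2 : ContDiff ℝ 2 ϑ)
    (hode : ∀ x : ℝ, q • deriv (deriv ϑ) x = ϑ x ᵥ* Az)
    (h0 : ϑ 0 = 0) :
    (∀ x : ℝ, ϑ x = fun j =>
      (Sum.elim (0 : Fin m → ℝ) (deriv ϑ 0)
        ᵥ* NormedSpace.exp (x • Fblock m q Az)) (Sum.inl j))
    ∧ (ϑ 1 = -Cz → IsUnit (Gblock m q Az).det →
        deriv ϑ 0 = -(Cz ᵥ* (Gblock m q Az)⁻¹)) := by
  have hsucc := contDiff_succ_iff_deriv.mp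
    (show ContDiff ℝ (1 + 1) ϑ by rw [one_add_one_eq_two]; exact hϑC2)
  have hϑdiff : Differentiable ℝ ϑ := hsucc.1
  have hϑ'diff : Differentiable ℝ (deriv ϑ) := hsucc.2.2.differentiable one_ne_zero
  set F := Fblock m q Az with hFdef
  set w : ℝ → (Fin m ⊕ Fin m) → ℝ := fun x => Sum.elim (ϑ x) (deriv ϑ x) with hwdef
  have hw : ∀ x, HasDerivAt w (w x ᵥ* F) x := by
    intro x
    have hval : w x ᵥ* F = Sum.elim (deriv ϑ x) (deriv (deriv ϑ) x) := by
      show (Sum.elim (ϑ x) (deriv ϑ x)) ᵥ* Matrix.fromBlocks 0 (q⁻¹ • Az) 1 0 = _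
      rw [Matrix.vecMul_fromBlocks]
      ext (i | i)
      · simp
      · simp only [Sum.elim_inr, Sum.elim_comp_inl, Sum.elim_comp_inr,
          Matrix.vecMul_zero, add_zero]
        have : ϑ x ᵥ* (q⁻¹ • Az) = q⁻¹ • (ϑ x ᵥ* Az) := by
          ext j; simp [Matrix.vecMul, dotProduct, Finset.mul_sum, mul_left_comm]
        rw [this, ← hode x, smul_smul, inv_mul_cancel₀ hq, one_smul]
    rw [hval, hasDerivAt_pi]
    rintro (j | j)
    · simpa [hwdef] using hasDerivAt_pi.mp (hϑdiff x).hasDerivAt j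
    · simpa [hwdef] using hasDerivAt_pi.mp (hϑ'diff x).hasDerivAt j
  have hw0 : w 0 = Sum.elim (0 : Fin m → ℝ) (deriv ϑ 0) := by
    rw [hwdef]; simp [h0]
  have part1 : ∀ x : ℝ, ϑ x = fun j =>
      (Sum.elim (0 : Fin m → ℝ) (deriv ϑ 0)
        ᵥ* NormedSpace.exp (x • Fblock m q Az)) (Sum.inl j) := by
    intro x
    funext j
    have huniq := ode_unique' F w hw x
    calc ϑ x j = w x (Sum.inl j) := rfl
      _ = (w 0 ᵥ* NormedSpace.exp (x • F)) (Sum.inl j) := by rw [huniq]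
      _ = (Sum.elim (0 : Fin m → ℝ) (deriv ϑ 0)
            ᵥ* NormedSpace.exp (x • Fblock m q Az)) (Sum.inl j) := by rw [hw0]
  refine ⟨part1, fun h1 hG => ?_⟩
  have key : deriv ϑ 0 ᵥ* Gblock m q Az = -Cz := by
    ext j
    have e := congrFun (part1 1) j
    rw [h1] at e
    rw [one_smul, ← Matrix.fromBlocks_toBlocks (NormedSpace.exp (Fblock m q Az)),
      Matrix.vecMul_fromBlocks] at e
    simp only [Sum.elim_inl, Sum.elim_comp_inl, Sum.elim_comp_inr,
      Matrix.zero_vecMul, zero_add] at e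
    exact e.symm
  calc deriv ϑ 0
      = deriv ϑ 0 ᵥ* (Gblock m q Az * (Gblock m q Az)⁻¹) := by
        rw [Matrix.mul_nonsing_inv _ hG, Matrix.vecMul_one]
    _ = (deriv ϑ 0 ᵥ* Gblock m q Az) ᵥ* (Gblock m q Az)⁻¹ := by
        rw [Matrix.vecMul_vecMul]
    _ = (-Cz) ᵥ* (Gblock m q Az)⁻¹ := by rw [key]
    _ = -(Cz ᵥ* (Gblock m q Az)⁻¹) := Matrix.neg_vecMul _ _
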